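/- Let n ≥ 1 and let R = ℤ[t,t⁻¹] be the ring of Laurent polynomials over ℤ. Consider the R-submodule M = {(p, q) ∈ R × R : (tⁿ − 1) divides (p − q) in R} of R × R. Then M is a free R-module with basis {(1 − tⁿ, 0), (1, 1)}; that is, the pair of elements (1 − tⁿ, 0) and (1, 1) is R-linearly independent and spans M over R. -/

import Mathlib

open LaurentPolynomial

lemma Tn_ne_one (n : ℕ) (hn : 1 ≤ n) : (T (n : ℤ) : LaurentPolynomial ℤ) ≠ 1 := by
  intro h
  have := congrArg (fun p : LaurentPolynomial ℤ => p.coeff (n : ℤ)) h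
  rw [← T_zero] at this
  simp only [T_apply, if_true] at this
  split_ifs at this with h' <;> omega

/-- The `R = ℤ[t,t⁻¹]`-submodule `M = {(p,q) : (tⁿ - 1) ∣ (p - q)}` of `R × R` is free with
basis `{(1 - tⁿ, 0), (1, 1)}`: these two elements are `R`-linearly independent and span `M`. -/
theorem stmt0 (n : ℕ) (hn : 1 ≤ n)
    (v : Fin 2 → LaurentPolynomial ℤ × LaurentPolynomial ℤ)
    (hv0 : v 0 = (1 - T (n : ℤ), 0)) (hv1 : v 1 = (1, 1)) :
    LinearIndependent (LaurentPolynomial ℤ) v ∧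
      ∀ x : LaurentPolynomial ℤ × LaurentPolynomial ℤ,
        x ∈ Submodule.span (LaurentPolynomial ℤ) (Set.range v) ↔
          (T (n : ℤ) - 1) ∣ (x.1 - x.2) := by
  have hT : (1 : LaurentPolynomial ℤ) - T (n : ℤ) ≠ 0 := by
    intro h
    exact Tn_ne_one n hn (by linear_combination -h)
  have hrange : Set.range v = {v 0, v 1} := by
    ext x
    constructor
    · rintro ⟨i, rfl⟩
      fin_cases i <;> simp
    · rintro (h | h) <;> exact ⟨_, h.symm⟩
  constructor
  · rw [Fintype.linearIndependent_iff]
    intro g hg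
    rw [Fin.sum_univ_two, hv0, hv1] at hg
    have h1 : g 0 * (1 - T (n : ℤ)) + g 1 = 0 ∧ g 1 = 0 := by
      constructor
      · have := congrArg Prod.fst hg
        simpa [smul_eq_mul] using this
      · have := congrArg Prod.snd hg
        simpa using this
    have hg1 : g 1 = 0 := h1.2
    have hg0 : g 0 = 0 := by
      have := h1.1
      rw [hg1, add_zero] at this
      exact (mul_eq_zero.mp this).resolve_right hT
    intro i; fin_cases i <;> assumption
  · intro x
    rw [hrange, Submodule.mem_span_pair]
    constructor
    · rintro ⟨a, b, rfl⟩
      rw [hv0, hv1]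
      refine ⟨-a, ?_⟩
      simp [smul_eq_mul, Prod.smul_mk]
      ring
    · rintro ⟨c, hc⟩
      refine ⟨-c, x.2, ?_⟩
      rw [hv0, hv1]
      have : x.1 = c * (T (n : ℤ) - 1) + x.2 := by linear_combination hc
      refine Prod.ext ?_ ?_
      · simp [smul_eq_mul, this]; ring_nf
      · simp
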